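/- For two trees u, v of equal size p, and any n, the number of m-labeled trees of size n containing u as a subtree equals the number containing v as a subtree. -/

import Mathlib

inductive UTree (σ : Type) : Type where
  | node : σ → List (UTree σ) → UTree σ

namespace UTree
variable {σ : Type}

noncomputable instance : DecidableEq (UTree σ) := Classical.decEq _

def children : UTree σ → List (UTree σ)
  | node _ cs => cs

def subs : UTree σ → List (UTree σ)
  | node a cs => node a cs :: (cs.attach.map (fun ⟨c, _⟩ => subs c)).flatten

def sibs : UTree σ → List (List (UTree σ))
  | node _ cs => cs.tails.filter (fun l => !l.isEmpty)
      ++ (cs.attach.map (fun ⟨c, _⟩ => sibs c)).flatten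

def sibseqs (t : UTree σ) : List (List (UTree σ)) := [t] :: sibs t

def edges : UTree σ → ℕ
  | node _ cs => cs.length + (cs.attach.map (fun ⟨c, _⟩ => edges c)).sum

def rootDeg : UTree σ → ℕ
  | node _ cs => cs.length

def nodes : UTree σ → ℕ
  | node _ cs => 1 + (cs.attach.map (fun ⟨c, _⟩ => nodes c)).sum

lemma edges_node (a : σ) (cs : List (UTree σ)) :
    edges (node a cs) = cs.length + (cs.map edges).sum := by
  rw [edges]; simp

lemma subs_node (a : σ) (cs : List (UTree σ)) :
    subs (node a cs) = node a cs :: (cs.map subs).flatten := by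
  rw [subs]; simp

lemma mem_subs_iff (s t : UTree σ) :
    s ∈ subs t ↔ s = t ∨ ∃ c ∈ children t, s ∈ subs c := by
  obtain ⟨a, cs⟩ := t
  rw [subs_node]
  simp [children]

lemma self_mem_subs (t : UTree σ) : t ∈ subs t := by
  rw [mem_subs_iff]; left; rfl

lemma edges_lt_of_mem_children {c : UTree σ} {t : UTree σ} (h : c ∈ children t) :
    edges c < edges t := by
  obtain ⟨a, cs⟩ := t
  rw [edges_node]
  simp only [children] at h
  have h1 : edges c ≤ (cs.map edges).sum := List.le_sum_of_mem (List.mem_map_of_mem h)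
  have h2 : 1 ≤ cs.length := List.length_pos_iff.mpr (by rintro rfl; simp at h)
  omega

lemma strong_ind (P : UTree σ → Prop)
    (h : ∀ t, (∀ s, edges s < edges t → P s) → P t) : ∀ t, P t := by
  intro t
  have : ∀ n (t : UTree σ), edges t ≤ n → P t := by
    intro n
    induction n with
    | zero => intro t ht; exact h t (fun s hs => by omega)
    | succ n ih =>
      intro t ht
      exact h t (fun s hs => ih s (by omega))
  exact this (edges t) t le_rfl

lemma edges_le_of_mem_subs {s t : UTree σ} (h : s ∈ subs t) : edges s ≤ edges t := by
  induction t using strong_ind with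
  | h t ih =>
    rw [mem_subs_iff] at h
    rcases h with rfl | ⟨c, hc, hsc⟩
    · exact le_rfl
    · exact (ih c (edges_lt_of_mem_children hc) hsc).trans
        (edges_lt_of_mem_children hc).le

lemma eq_of_mem_subs_of_edges_le {s t : UTree σ} (h : s ∈ subs t)
    (he : edges t ≤ edges s) : s = t := by
  rw [mem_subs_iff] at h
  rcases h with rfl | ⟨c, hc, hsc⟩
  · rfl
  · have h1 := edges_le_of_mem_subs hsc
    have h2 := edges_lt_of_mem_children hc
    omega

noncomputable def swap (u v : UTree σ) : UTree σ → UTree σ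
  | node a cs =>
    if node a cs = u then v
    else if node a cs = v then u
    else node a (cs.attach.map (fun ⟨c, _⟩ => swap u v c))

lemma swap_def (u v t : UTree σ) :
    swap u v t = if t = u then v else if t = v then u
      else node (match t with | node a _ => a) ((children t).map (swap u v)) := by
  obtain ⟨a, cs⟩ := t
  rw [swap]
  simp [children]

variable {u v : UTree σ} (huv : edges u = edges v)
include huv

lemma edges_swap (t : UTree σ) : edges (swap u v t) = edges t := by
  induction t using strong_ind with
  | h t ih =>
    obtain ⟨a, cs⟩ := t
    rw [swap_def]
    split
    · next h => rw [h, huv]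
    · split
      · next _ h => rw [h, huv]
      · rw [edges_node, edges_node, children]
        simp only [List.length_map, List.map_map]
        congr 1
        congr 1
        refine List.map_congr_left fun c hc => ?_
        exact ih c (edges_lt_of_mem_children (by simpa [children] using hc))

lemma swap_of_not_mem {t : UTree σ} (h1 : u ∉ subs t) (h2 : v ∉ subs t) :
    swap u v t = t := by
  induction t using strong_ind with
  | h t ih =>
    obtain ⟨a, cs⟩ := t
    rw [swap_def]
    rw [if_neg, if_neg]
    · simp only [children]
      congr 1
      conv_rhs => rw [← List.map_id cs]
      refine List.map_congr_left fun c hc => ?_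
      refine ih c (edges_lt_of_mem_children (by simpa [children] using hc)) ?_ ?_
      · exact fun hm => h1 ((mem_subs_iff _ _).2 (Or.inr ⟨c, by simpa [children] using hc, hm⟩))
      · exact fun hm => h2 ((mem_subs_iff _ _).2 (Or.inr ⟨c, by simpa [children] using hc, hm⟩))
    · rintro rfl; exact h2 (self_mem_subs _)
    · rintro rfl; exact h1 (self_mem_subs _)

lemma mem_subs_swap {t : UTree σ} (h : u ∈ subs t) : v ∈ subs (swap u v t) := by
  induction t using strong_ind with
  | h t ih =>
    rw [swap_def]
    split
    · exact self_mem_subs v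
    · next hne =>
      split
      · next heq =>
        -- t = v, u ∈ subs v, edges u = edges v → u = v, contradicting hne... 
        subst heq
        have := eq_of_mem_subs_of_edges_le h (le_of_eq huv.symm)
        exact absurd this.symm hne
      · rw [mem_subs_iff] at h
        rcases h with rfl | ⟨c, hc, hsc⟩
        · exact absurd rfl hne
        · rw [mem_subs_iff]
          right
          exact ⟨swap u v c, by simp [children]; exact ⟨c, hc, rfl⟩,
            ih c (edges_lt_of_mem_children hc) hsc⟩

lemma mem_subs_swap' {t : UTree σ} (h : v ∈ subs t) : u ∈ subs (swap u v t) := by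
  induction t using strong_ind with
  | h t ih =>
    rw [swap_def]
    split
    · next heq =>
      subst heq
      have := eq_of_mem_subs_of_edges_le h (le_of_eq huv)
      rw [this]
      exact self_mem_subs _
    · split
      · exact self_mem_subs u
      · next hne _ =>
        rw [mem_subs_iff] at h
        rcases h with rfl | ⟨c, hc, hsc⟩
        · next hnev => exact absurd rfl hnev
        · rw [mem_subs_iff]
          right
          exact ⟨swap u v c, by simp [children]; exact ⟨c, hc, rfl⟩,
            ih c (edges_lt_of_mem_children hc) hsc⟩

lemma swap_ne {t : UTree σ} (h1 : t ≠ u) (h2 : t ≠ v) :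
    swap u v t ≠ u ∧ swap u v t ≠ v := by
  by_cases hmem : (u ∈ subs t ∧ t ≠ u) ∨ (v ∈ subs t ∧ t ≠ v)
  · -- t properly contains u or v; then swap t properly contains v or u
    obtain ⟨a, cs⟩ := t
    have hkey : ∃ w : UTree σ, edges w = edges u ∧
        ∃ c ∈ cs, w ∈ subs (swap u v c) := by
      rcases hmem with ⟨hm, _⟩ | ⟨hm, _⟩
      · rw [mem_subs_iff] at hm
        rcases hm with rfl | ⟨c, hc, hsc⟩
        · exact absurd rfl h1
        · exact ⟨v, huv.symm, c, by simpa [children] using hc, mem_subs_swap huv hsc⟩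
      · rw [mem_subs_iff] at hm
        rcases hm with rfl | ⟨c, hc, hsc⟩
        · exact absurd rfl h2
        · exact ⟨u, rfl, c, by simpa [children] using hc, mem_subs_swap' huv hsc⟩
    obtain ⟨w, hw, c, hc, hwc⟩ := hkey
    rw [swap_def, if_neg h1, if_neg h2]
    constructor <;> intro heq <;>
    · -- swap c is a child of u (resp. v), containing w of full size: contradiction
      have hch : swap u v c ∈ children (node a ((children (node a cs)).map (swap u v))) := by
        simp [children]; exact ⟨c, hc, rfl⟩
      rw [heq] at hch
      have hlt := edges_lt_of_mem_children hch
      have hle := edges_le_of_mem_subs hwc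
      simp only [huv] at hw hlt hle ⊢
      omega
  · push_neg at hmem
    obtain ⟨hm1, hm2⟩ := hmem
    have hu : u ∉ subs t := fun h => h1 (hm1 h)
    have hv : v ∉ subs t := fun h => h2 (hm2 h)
    rw [swap_of_not_mem huv hu hv]
    exact ⟨h1, h2⟩

omit huv in
lemma swap_left : swap u v u = v := by
  rw [swap_def, if_pos rfl]

omit huv in
lemma swap_right : swap u v v = u := by
  rw [swap_def]
  split
  · next h => exact h
  · rw [if_pos rfl]

lemma swap_swap (t : UTree σ) : swap u v (swap u v t) = t := by
  induction t using strong_ind with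
  | h t ih =>
    by_cases h1 : t = u
    · subst h1; rw [swap_left, swap_right]
    · by_cases h2 : t = v
      · subst h2; rw [swap_right, swap_left]
      · obtain ⟨hn1, hn2⟩ := swap_ne huv h1 h2
        obtain ⟨a, cs⟩ := t
        have hs : swap u v (node a cs) = node a (cs.map (swap u v)) := by
          rw [swap_def, if_neg h1, if_neg h2]
          simp [children]
        rw [hs] at hn1 hn2
        rw [hs, swap_def, if_neg hn1, if_neg hn2]
        simp only [children, List.map_map]
        congr 1
        conv_rhs => rw [← List.map_id cs]
        refine List.map_congr_left fun c hc => ?_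
        exact ih c (edges_lt_of_mem_children (t := node a cs) (by simpa [children] using hc))

end UTree

/-- For trees `u`, `v` of equal size `p`, and any `n`, the number of `m`-labeled trees of
size `n` containing `u` as a subtree equals the number containing `v` as a subtree. -/
theorem card_containing_eq_of_size_eq (m p n : ℕ) (u v : UTree (Fin m))
    (hu : UTree.edges u = p) (hv : UTree.edges v = p) :
    Nat.card {t : UTree (Fin m) // UTree.edges t = n ∧ u ∈ UTree.subs t} =
      Nat.card {t : UTree (Fin m) // UTree.edges t = n ∧ v ∈ UTree.subs t} := by
  have huv : UTree.edges u = UTree.edges v := by rw [hu, hv]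
  apply Nat.card_congr
  exact
    { toFun := fun ⟨t, ht, hm⟩ => ⟨UTree.swap u v t,
        by rw [UTree.edges_swap huv]; exact ht, UTree.mem_subs_swap huv hm⟩
      invFun := fun ⟨t, ht, hm⟩ => ⟨UTree.swap u v t,
        by rw [UTree.edges_swap huv]; exact ht, UTree.mem_subs_swap' huv hm⟩
      left_inv := fun ⟨t, _, _⟩ => Subtype.ext (UTree.swap_swap huv t)
      right_inv := fun ⟨t, _, _⟩ => Subtype.ext (UTree.swap_swap huv t) }
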